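/- arXiv:1709.04123 — 7 statements merged into one kernel-verified Lean document; each statement's English description precedes it below -/
import Mathlib

section
/- For a seed set S of accepting nodes and any set S' of accepting nodes with S ⊆ S' ⊆ V(S), the exposed sets coincide: V(S') = V(S), and hence π(S') = π(S). -/
/-- One step of exposure: `b` hears about the product from `a`,
which requires `a` to be adjacent to `b` and `a` to be accepting. -/
def step {V : Type*} (G : SimpleGraph V) (acc : V → Prop) (a b : V) : Prop :=
  G.Adj a b ∧ acc a

/-- `reach G acc i j`: there is a path from `i` to `j` all of whose
nodes other than possibly `j` are accepting. -/
def reach {V : Type*} (G : SimpleGraph V) (acc : V → Prop) : V → V → Prop :=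
  Relation.ReflTransGen (step G acc)

/-- `V(S)`: the set of nodes exposed to the product when `S` is seeded. -/
def exposedSet {V : Type*} (G : SimpleGraph V) (acc : V → Prop) (S : Set V) : Set V :=
  {j | ∃ i ∈ S, reach G acc i j}

/-- `V^+(S)`: exposed accepting nodes. -/
def Vpos {V : Type*} (G : SimpleGraph V) (acc : V → Prop) (S : Set V) : Set V :=
  {j | j ∈ exposedSet G acc S ∧ acc j}

/-- `V^-(S)`: exposed rejecting nodes. -/
def Vneg {V : Type*} (G : SimpleGraph V) (acc : V → Prop) (S : Set V) : Set V :=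
  {j | j ∈ exposedSet G acc S ∧ ¬ acc j}

/-- Payoff `π(S) = p|V^+(S)| - q|V^-(S)|`. -/
noncomputable def payoff {V : Type*} (p q : ℝ) (G : SimpleGraph V) (acc : V → Prop)
    (S : Set V) : ℝ :=
  p * (Vpos G acc S).ncard - q * (Vneg G acc S).ncard

/-- For a seed set `S` of accepting nodes and any set `S'` of
accepting nodes with `S ⊆ S' ⊆ V(S)`, the exposed sets coincide,
`V(S') = V(S)`, and hence `π(S') = π(S)`. -/
theorem exposed_eq_of_between {V : Type*} [Fintype V] (G : SimpleGraph V)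
    (θ : V → ℝ) (φ : ℝ) (hθ : ∀ v, θ v ∈ Set.Icc (0 : ℝ) 1) (hφ : φ ∈ Set.Icc (0 : ℝ) 1)
    (p q : ℝ) (S S' : Set V)
    (hS : ∀ i ∈ S, θ i ≤ φ) (hS' : ∀ i ∈ S', θ i ≤ φ)
    (h1 : S ⊆ S') (h2 : S' ⊆ exposedSet G (fun v => θ v ≤ φ) S) :
    exposedSet G (fun v => θ v ≤ φ) S' = exposedSet G (fun v => θ v ≤ φ) S ∧
      payoff p q G (fun v => θ v ≤ φ) S' = payoff p q G (fun v => θ v ≤ φ) S := by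
  have key : exposedSet G (fun v => θ v ≤ φ) S' = exposedSet G (fun v => θ v ≤ φ) S := by
    apply Set.Subset.antisymm
    · rintro j ⟨i, hiS', hij⟩
      obtain ⟨s, hsS, hsi⟩ := h2 hiS'
      exact ⟨s, hsS, Relation.ReflTransGen.trans hsi hij⟩
    · rintro j ⟨i, hiS, hij⟩
      exact ⟨i, h1 hiS, hij⟩
  refine ⟨key, ?_⟩
  unfold payoff Vpos Vneg
  rw [key]
end

section
/- The payoff function π is monotone nondecreasing in seeds from the interior, but it is neither submodular nor supermodular in general: there exists a graph G, thresholds, and p = q = 1 for which both the submodularity and the supermodularity inequalities fail. -/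
/-- Any set containing the seeds and closed under one-step exposure contains
the exposed set. -/
lemma exposedSet_subset_closed {V : Type*} (G : SimpleGraph V) (acc : V → Prop)
    (S T : Set V) (hS : S ⊆ T)
    (hcl : ∀ a ∈ T, acc a → ∀ b, G.Adj a b → b ∈ T) :
    exposedSet G acc S ⊆ T := by
  rintro j ⟨i, hi, h⟩
  induction h with
  | refl => exact hS hi
  | tail _ h2 ih => exact hcl _ ih h2.2 _ h2.1

lemma exposedSet_empty {V : Type*} (G : SimpleGraph V) (acc : V → Prop) :
    exposedSet G acc (∅ : Set V) = ∅ := by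
  ext j; simp [exposedSet]

/-- Adding an already-exposed node as a seed does not change the exposed set. -/
lemma exposedSet_union_mem {V : Type*} (G : SimpleGraph V) (acc : V → Prop)
    (S : Set V) (x : V) (hx : x ∈ exposedSet G acc S) :
    exposedSet G acc (S ∪ {x}) = exposedSet G acc S := by
  obtain ⟨i, hi, hix⟩ := hx
  ext j
  constructor
  · rintro ⟨i', hi', h⟩
    rcases hi' with hi' | hi'
    · exact ⟨i', hi', h⟩
    · rcases hi' with rfl
      exact ⟨i, hi, hix.trans h⟩
  · rintro ⟨i', hi', h⟩
    exact ⟨i', Or.inl hi', h⟩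

/-- Adjacency for the 3-node witness graph: edges 0–2 and 1–2. -/
def Rsub : Fin 3 → Fin 3 → Prop := fun a b =>
  (a = 0 ∧ b = 2) ∨ (a = 1 ∧ b = 2) ∨ (a = 2 ∧ b = 0) ∨ (a = 2 ∧ b = 1)

instance : DecidableRel Rsub := fun a b => by unfold Rsub; infer_instance

/-- The 3-node witness graph: edges 0–2 and 1–2. -/
def Gsub : SimpleGraph (Fin 3) :=
  ⟨Rsub, ⟨fun a b h => (show ∀ a b, Rsub a b → Rsub b a by decide) a b h⟩,
    ⟨fun a h => (show ∀ a, ¬ Rsub a a by decide) a h⟩⟩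

instance : DecidableRel Gsub.Adj := fun a b => inferInstanceAs (Decidable (Rsub a b))

/-- The 2-node witness graph: single edge 0–1. -/
def Gsup : SimpleGraph (Fin 2) :=
  ⟨fun a b => a ≠ b, ⟨fun a b h => Ne.symm h⟩, ⟨fun a h => h rfl⟩⟩

instance : DecidableRel Gsup.Adj := fun a b => inferInstanceAs (Decidable (a ≠ b))

def acc3 : Fin 3 → Prop := fun i => i ≠ 2

instance : DecidablePred acc3 := fun i => inferInstanceAs (Decidable (i ≠ 2))

lemma exposedSet_Gsub_0 : exposedSet Gsub acc3 {0} = {0, 2} := by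
  apply subset_antisymm
  · apply exposedSet_subset_closed
    · intro a ha; rcases ha with rfl; left; rfl
    · intro a ha hacc b hab
      simp only [Set.mem_insert_iff, Set.mem_singleton_iff] at ha ⊢
      rcases ha with rfl | rfl
      · rcases hab with ⟨_, rfl⟩ | ⟨h, _⟩ | ⟨h, _⟩ | ⟨h, _⟩ <;> simp_all
      · exact absurd rfl hacc
  · rintro j (rfl | rfl)
    · exact ⟨0, rfl, Relation.ReflTransGen.refl⟩
    · exact ⟨0, rfl, Relation.ReflTransGen.single ⟨Or.inl ⟨rfl, rfl⟩, by decide⟩⟩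

lemma exposedSet_Gsub_1 : exposedSet Gsub acc3 {1} = {1, 2} := by
  apply subset_antisymm
  · apply exposedSet_subset_closed
    · intro a ha; rcases ha with rfl; left; rfl
    · intro a ha hacc b hab
      simp only [Set.mem_insert_iff, Set.mem_singleton_iff] at ha ⊢
      rcases ha with rfl | rfl
      · rcases hab with ⟨h, _⟩ | ⟨_, rfl⟩ | ⟨h, _⟩ | ⟨h, _⟩ <;> simp_all
      · exact absurd rfl hacc
  · rintro j (rfl | rfl)
    · exact ⟨1, rfl, Relation.ReflTransGen.refl⟩
    · exact ⟨1, rfl, Relation.ReflTransGen.single ⟨Or.inr (Or.inl ⟨rfl, rfl⟩), by decide⟩⟩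

lemma exposedSet_Gsub_01 : exposedSet Gsub acc3 ({1} ∪ {0}) = Set.univ := by
  apply subset_antisymm (Set.subset_univ _)
  intro j _
  fin_cases j
  · exact ⟨0, Or.inr rfl, Relation.ReflTransGen.refl⟩
  · exact ⟨1, Or.inl rfl, Relation.ReflTransGen.refl⟩
  · exact ⟨0, Or.inr rfl, Relation.ReflTransGen.single ⟨Or.inl ⟨rfl, rfl⟩, by decide⟩⟩

lemma exposedSet_Gsup_1 (S : Set (Fin 2)) (h1 : (1 : Fin 2) ∈ S) :
    exposedSet Gsup (fun _ => True) S = Set.univ := by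
  apply subset_antisymm (Set.subset_univ _)
  intro j _
  fin_cases j
  · exact ⟨1, h1, Relation.ReflTransGen.single ⟨by decide, trivial⟩⟩
  · exact ⟨1, h1, Relation.ReflTransGen.refl⟩

lemma exposedSet_Gsup_0 : exposedSet Gsup (fun _ => True) {0} = Set.univ := by
  apply subset_antisymm (Set.subset_univ _)
  intro j _
  fin_cases j
  · exact ⟨0, rfl, Relation.ReflTransGen.refl⟩
  · exact ⟨0, rfl, Relation.ReflTransGen.single ⟨by decide, trivial⟩⟩

lemma payoff_eq {V : Type*} (G : SimpleGraph V) (acc : V → Prop) (S : Set V) :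
    payoff 1 1 G acc S =
      ((Vpos G acc S).ncard : ℝ) - ((Vneg G acc S).ncard : ℝ) := by
  simp [payoff]

lemma Vpos_eq {V : Type*} (G : SimpleGraph V) (acc : V → Prop) (S E : Set V)
    (hE : exposedSet G acc S = E) : Vpos G acc S = {j ∈ E | acc j} := by
  subst hE; rfl

lemma Vneg_eq {V : Type*} (G : SimpleGraph V) (acc : V → Prop) (S E : Set V)
    (hE : exposedSet G acc S = E) : Vneg G acc S = {j ∈ E | ¬ acc j} := by
  subst hE; rfl

/-- The payoff is monotone nondecreasing when adding seeds from
the interior `V^+(S)`, but it is neither submodular nor supermodular in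
general: there is an instance with `p = q = 1` where the submodularity
inequality fails, and one where the supermodularity inequality fails. -/
theorem payoff_monotone_interior_not_sub_or_supermodular :
    (∀ (V : Type) [Fintype V] (G : SimpleGraph V) (acc : V → Prop) (p q : ℝ),
      0 < p → 0 < q → ∀ S : Set V, (∀ i ∈ S, acc i) →
      ∀ x ∈ Vpos G acc S,
        payoff p q G acc S ≤ payoff p q G acc (S ∪ {x})) ∧
    (∃ (n : ℕ) (G : SimpleGraph (Fin n)) (acc : Fin n → Prop)
        (S' S : Set (Fin n)) (x : Fin n),
      (∀ i ∈ S ∪ S' ∪ {x}, acc i) ∧ S' ⊆ S ∧ x ∉ S ∧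
      payoff 1 1 G acc (S' ∪ {x}) - payoff 1 1 G acc S' <
        payoff 1 1 G acc (S ∪ {x}) - payoff 1 1 G acc S) ∧
    (∃ (n : ℕ) (G : SimpleGraph (Fin n)) (acc : Fin n → Prop)
        (S' S : Set (Fin n)) (x : Fin n),
      (∀ i ∈ S ∪ S' ∪ {x}, acc i) ∧ S' ⊆ S ∧ x ∉ S ∧
      payoff 1 1 G acc (S ∪ {x}) - payoff 1 1 G acc S <
        payoff 1 1 G acc (S' ∪ {x}) - payoff 1 1 G acc S') := by
  refine ⟨?_, ?_, ?_⟩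
  · -- monotonicity: in fact the payoff is unchanged.
    intro V _ G acc p q hp hq S hS x hx
    have hE : exposedSet G acc (S ∪ {x}) = exposedSet G acc S :=
      exposedSet_union_mem G acc S x hx.1
    have h1 : Vpos G acc (S ∪ {x}) = Vpos G acc S := by
      unfold Vpos; rw [hE]
    have h2 : Vneg G acc (S ∪ {x}) = Vneg G acc S := by
      unfold Vneg; rw [hE]
    have heq : payoff p q G acc (S ∪ {x}) = payoff p q G acc S := by
      unfold payoff; rw [h1, h2]
    exact le_of_eq heq.symm
  · -- submodularity fails: S' = ∅, S = {1}, x = 0 in the 3-node graph.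
    refine ⟨3, Gsub, acc3, ∅, {1}, 0, ?_, Set.empty_subset _, by simp, ?_⟩
    · rintro i ((rfl | h) | rfl)
      · decide
      · exact absurd h (Set.notMem_empty i)
      · decide
    · have e0 : exposedSet Gsub acc3 (∅ ∪ {0}) = {0, 2} := by
        rw [Set.empty_union]; exact exposedSet_Gsub_0
      have p0 : payoff 1 1 Gsub acc3 (∅ ∪ {0}) = 0 := by
        rw [payoff_eq, Vpos_eq _ _ _ _ e0, Vneg_eq _ _ _ _ e0]
        have h1 : {j ∈ ({0, 2} : Set (Fin 3)) | acc3 j} = {0} := by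
          ext j; fin_cases j <;> simp [acc3]
        have h2 : {j ∈ ({0, 2} : Set (Fin 3)) | ¬ acc3 j} = {2} := by
          ext j; fin_cases j <;> simp [acc3]
        rw [h1, h2]; simp
      have pe : payoff 1 1 Gsub acc3 ∅ = 0 := by
        rw [payoff_eq, Vpos_eq _ _ _ _ (exposedSet_empty Gsub acc3),
          Vneg_eq _ _ _ _ (exposedSet_empty Gsub acc3)]
        simp
      have p1 : payoff 1 1 Gsub acc3 {1} = 0 := by
        rw [payoff_eq, Vpos_eq _ _ _ _ exposedSet_Gsub_1,
          Vneg_eq _ _ _ _ exposedSet_Gsub_1]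
        have h1 : {j ∈ ({1, 2} : Set (Fin 3)) | acc3 j} = {1} := by
          ext j; fin_cases j <;> simp [acc3]
        have h2 : {j ∈ ({1, 2} : Set (Fin 3)) | ¬ acc3 j} = {2} := by
          ext j; fin_cases j <;> simp [acc3]
        rw [h1, h2]; simp
      have p01 : payoff 1 1 Gsub acc3 ({1} ∪ {0}) = 1 := by
        rw [payoff_eq, Vpos_eq _ _ _ _ exposedSet_Gsub_01,
          Vneg_eq _ _ _ _ exposedSet_Gsub_01]
        have h1 : {j ∈ (Set.univ : Set (Fin 3)) | acc3 j} = {0, 1} := by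
          ext j; fin_cases j <;> simp [acc3]
        have h2 : {j ∈ (Set.univ : Set (Fin 3)) | ¬ acc3 j} = {2} := by
          ext j; fin_cases j <;> simp [acc3]
        rw [h1, h2, Set.ncard_pair (by decide), Set.ncard_singleton]
        norm_num
      rw [p0, pe, p1, p01]; norm_num
  · -- supermodularity fails: S' = ∅, S = {0}, x = 1 in the 2-node graph.
    refine ⟨2, Gsup, fun _ => True, ∅, {0}, 1, fun i _ => trivial,
      Set.empty_subset _, by simp, ?_⟩
    have huniv : ∀ S : Set (Fin 2), exposedSet Gsup (fun _ => True) S = Set.univ →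
        payoff 1 1 Gsup (fun _ => True) S = 2 := by
      intro S hE
      rw [payoff_eq, Vpos_eq _ _ _ _ hE, Vneg_eq _ _ _ _ hE]
      have h1 : {j ∈ (Set.univ : Set (Fin 2)) | True} = Set.univ := by
        ext j; simp
      have h2 : {j ∈ (Set.univ : Set (Fin 2)) | ¬ True} = ∅ := by
        ext j; simp
      rw [h1, h2, Set.ncard_univ]
      simp
    have p01 : payoff 1 1 Gsup (fun _ => True) ({0} ∪ {1}) = 2 :=
      huniv _ (exposedSet_Gsup_1 _ (Or.inr rfl))
    have p0 : payoff 1 1 Gsup (fun _ => True) {0} = 2 :=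
      huniv _ exposedSet_Gsup_0
    have p1 : payoff 1 1 Gsup (fun _ => True) (∅ ∪ {1}) = 2 :=
      huniv _ (exposedSet_Gsup_1 _ (Or.inr rfl))
    have pe : payoff 1 1 Gsup (fun _ => True) ∅ = 0 := by
      rw [payoff_eq, Vpos_eq _ _ _ _ (exposedSet_empty _ _),
        Vneg_eq _ _ _ _ (exposedSet_empty _ _)]
      simp
    rw [p01, p0, p1, pe]; norm_num
end

section
/- There exists an instance (a graph with thresholds and p = q = 1) in which the naive seed set {i accepting : π({i}) ≥ 0} is empty and achieves payoff 0, while some seed set of accepting nodes achieves strictly positive payoff. -/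
/- ### Auxiliary construction: the 7-node counterexample -/

def adjB : Fin 7 → Fin 7 → Bool := fun a b =>
  (a.val, b.val) ∈ [(0,1),(1,0),(2,3),(3,2),(0,4),(4,0),(0,5),(5,0),(0,6),(6,0),
    (2,4),(4,2),(2,5),(5,2),(2,6),(6,2)]

def G7 : SimpleGraph (Fin 7) where
  Adj a b := adjB a b
  symm := ⟨by intro a b; revert a b; decide⟩
  loopless := ⟨by intro a; revert a; decide⟩

def acc7 : Fin 7 → Prop := fun v => v.val ≤ 3

def θ7 : Fin 7 → ℝ := fun v => if v.val ≤ 3 then 0 else 1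

lemma acc7_eq : (fun v : Fin 7 => θ7 v ≤ (1/2 : ℝ)) = acc7 := by
  funext v
  by_cases h : v.val ≤ 3 <;> simp [θ7, acc7, h] <;> norm_num

lemma exposed_subset (S E : Set (Fin 7)) (hS : S ⊆ E)
    (hcl : ∀ a b : Fin 7, a ∈ E → step G7 acc7 a b → b ∈ E) :
    exposedSet G7 acc7 S ⊆ E := by
  rintro j ⟨i, hi, hr⟩
  induction hr with
  | refl => exact hS hi
  | tail _ hbc ih => exact hcl _ _ ih hbc

lemma stepd (a b : Fin 7) (h : adjB a b = true) (h2 : a.val ≤ 3) : step G7 acc7 a b :=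
  ⟨h, h2⟩

lemma cl1 : ∀ a b : Fin 7, a ∈ ({0,1,4,5,6} : Set (Fin 7)) → step G7 acc7 a b →
    b ∈ ({0,1,4,5,6} : Set (Fin 7)) := by
  rintro a b ha ⟨hadj, hacc⟩
  simp only [Set.mem_insert_iff, Set.mem_singleton_iff] at ha ⊢
  change adjB a b = true at hadj
  change a.val ≤ 3 at hacc
  revert ha hadj hacc
  revert a b; decide

lemma cl2 : ∀ a b : Fin 7, a ∈ ({2,3,4,5,6} : Set (Fin 7)) → step G7 acc7 a b →
    b ∈ ({2,3,4,5,6} : Set (Fin 7)) := by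
  rintro a b ha ⟨hadj, hacc⟩
  simp only [Set.mem_insert_iff, Set.mem_singleton_iff] at ha ⊢
  change adjB a b = true at hadj
  change a.val ≤ 3 at hacc
  revert ha hadj hacc
  revert a b; decide

lemma exp0 : exposedSet G7 acc7 {0} = {0,1,4,5,6} := by
  apply subset_antisymm
  · exact exposed_subset _ _ (by simp) cl1
  · rintro j hj
    simp only [Set.mem_insert_iff, Set.mem_singleton_iff] at hj
    rcases hj with rfl|rfl|rfl|rfl|rfl
    · exact ⟨0, rfl, .refl⟩
    · exact ⟨0, rfl, .single (stepd 0 1 rfl (by decide))⟩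
    · exact ⟨0, rfl, .single (stepd 0 4 rfl (by decide))⟩
    · exact ⟨0, rfl, .single (stepd 0 5 rfl (by decide))⟩
    · exact ⟨0, rfl, .single (stepd 0 6 rfl (by decide))⟩

lemma exp1 : exposedSet G7 acc7 {1} = {0,1,4,5,6} := by
  apply subset_antisymm
  · exact exposed_subset _ _ (by simp) cl1
  · rintro j hj
    simp only [Set.mem_insert_iff, Set.mem_singleton_iff] at hj
    rcases hj with rfl|rfl|rfl|rfl|rfl
    · exact ⟨1, rfl, .single (stepd 1 0 rfl (by decide))⟩
    · exact ⟨1, rfl, .refl⟩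
    · exact ⟨1, rfl, .head (stepd 1 0 rfl (by decide))
        (.single (stepd 0 4 rfl (by decide)))⟩
    · exact ⟨1, rfl, .head (stepd 1 0 rfl (by decide))
        (.single (stepd 0 5 rfl (by decide)))⟩
    · exact ⟨1, rfl, .head (stepd 1 0 rfl (by decide))
        (.single (stepd 0 6 rfl (by decide)))⟩

lemma exp2 : exposedSet G7 acc7 {2} = {2,3,4,5,6} := by
  apply subset_antisymm
  · exact exposed_subset _ _ (by simp) cl2
  · rintro j hj
    simp only [Set.mem_insert_iff, Set.mem_singleton_iff] at hj
    rcases hj with rfl|rfl|rfl|rfl|rfl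
    · exact ⟨2, rfl, .refl⟩
    · exact ⟨2, rfl, .single (stepd 2 3 rfl (by decide))⟩
    · exact ⟨2, rfl, .single (stepd 2 4 rfl (by decide))⟩
    · exact ⟨2, rfl, .single (stepd 2 5 rfl (by decide))⟩
    · exact ⟨2, rfl, .single (stepd 2 6 rfl (by decide))⟩

lemma exp3 : exposedSet G7 acc7 {3} = {2,3,4,5,6} := by
  apply subset_antisymm
  · exact exposed_subset _ _ (by simp) cl2
  · rintro j hj
    simp only [Set.mem_insert_iff, Set.mem_singleton_iff] at hj
    rcases hj with rfl|rfl|rfl|rfl|rfl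
    · exact ⟨3, rfl, .single (stepd 3 2 rfl (by decide))⟩
    · exact ⟨3, rfl, .refl⟩
    · exact ⟨3, rfl, .head (stepd 3 2 rfl (by decide))
        (.single (stepd 2 4 rfl (by decide)))⟩
    · exact ⟨3, rfl, .head (stepd 3 2 rfl (by decide))
        (.single (stepd 2 5 rfl (by decide)))⟩
    · exact ⟨3, rfl, .head (stepd 3 2 rfl (by decide))
        (.single (stepd 2 6 rfl (by decide)))⟩

lemma expU : exposedSet G7 acc7 {0,1,2,3} = Set.univ := by
  apply Set.eq_univ_of_forall
  intro j
  have h0 : (0 : Fin 7) ∈ ({0,1,2,3} : Set (Fin 7)) := by simp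
  have h1 : (1 : Fin 7) ∈ ({0,1,2,3} : Set (Fin 7)) := by simp
  have h2 : (2 : Fin 7) ∈ ({0,1,2,3} : Set (Fin 7)) := by simp
  have h3 : (3 : Fin 7) ∈ ({0,1,2,3} : Set (Fin 7)) := by simp
  fin_cases j
  · exact ⟨0, h0, .refl⟩
  · exact ⟨1, h1, .refl⟩
  · exact ⟨2, h2, .refl⟩
  · exact ⟨3, h3, .refl⟩
  · exact ⟨0, h0, .single (stepd 0 4 rfl (by decide))⟩
  · exact ⟨0, h0, .single (stepd 0 5 rfl (by decide))⟩
  · exact ⟨0, h0, .single (stepd 0 6 rfl (by decide))⟩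

lemma ncard2 : ({0,1} : Set (Fin 7)).ncard = 2 := Set.ncard_pair (by decide)

lemma ncard2' : ({2,3} : Set (Fin 7)).ncard = 2 := Set.ncard_pair (by decide)

lemma ncard3 : ({4,5,6} : Set (Fin 7)).ncard = 3 := by
  rw [Set.ncard_insert_of_notMem (by decide),
      Set.ncard_insert_of_notMem (by decide), Set.ncard_singleton]

lemma ncard4 : ({0,1,2,3} : Set (Fin 7)).ncard = 4 := by
  rw [Set.ncard_insert_of_notMem (by decide),
      Set.ncard_insert_of_notMem (by decide),
      Set.ncard_insert_of_notMem (by decide), Set.ncard_singleton]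

lemma pay_calc (S E P N : Set (Fin 7)) (hE : exposedSet G7 acc7 S = E)
    (hP : ∀ j : Fin 7, j ∈ E ∧ acc7 j ↔ j ∈ P)
    (hN : ∀ j : Fin 7, j ∈ E ∧ ¬ acc7 j ↔ j ∈ N) :
    payoff 1 1 G7 acc7 S = (P.ncard : ℝ) - N.ncard := by
  have hVp : Vpos G7 acc7 S = P := by
    ext j; rw [← hP j]; unfold Vpos; rw [hE]; rfl
  have hVn : Vneg G7 acc7 S = N := by
    ext j; rw [← hN j]; unfold Vneg; rw [hE]; rfl
  unfold payoff
  rw [hVp, hVn, one_mul, one_mul]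

lemma pay0 : payoff 1 1 G7 acc7 {0} = -1 := by
  rw [pay_calc {0} {0,1,4,5,6} {0,1} {4,5,6} exp0
    (by intro j; simp only [Set.mem_insert_iff, Set.mem_singleton_iff, acc7]; revert j; decide)
    (by intro j; simp only [Set.mem_insert_iff, Set.mem_singleton_iff, acc7]; revert j; decide),
    ncard2, ncard3]
  norm_num

lemma pay1 : payoff 1 1 G7 acc7 {1} = -1 := by
  rw [pay_calc {1} {0,1,4,5,6} {0,1} {4,5,6} exp1
    (by intro j; simp only [Set.mem_insert_iff, Set.mem_singleton_iff, acc7]; revert j; decide)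
    (by intro j; simp only [Set.mem_insert_iff, Set.mem_singleton_iff, acc7]; revert j; decide),
    ncard2, ncard3]
  norm_num

lemma pay2 : payoff 1 1 G7 acc7 {2} = -1 := by
  rw [pay_calc {2} {2,3,4,5,6} {2,3} {4,5,6} exp2
    (by intro j; simp only [Set.mem_insert_iff, Set.mem_singleton_iff, acc7]; revert j; decide)
    (by intro j; simp only [Set.mem_insert_iff, Set.mem_singleton_iff, acc7]; revert j; decide),
    ncard2', ncard3]
  norm_num

lemma pay3 : payoff 1 1 G7 acc7 {3} = -1 := by
  rw [pay_calc {3} {2,3,4,5,6} {2,3} {4,5,6} exp3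
    (by intro j; simp only [Set.mem_insert_iff, Set.mem_singleton_iff, acc7]; revert j; decide)
    (by intro j; simp only [Set.mem_insert_iff, Set.mem_singleton_iff, acc7]; revert j; decide),
    ncard2', ncard3]
  norm_num

lemma payU : payoff 1 1 G7 acc7 {0,1,2,3} = 1 := by
  rw [pay_calc {0,1,2,3} Set.univ {0,1,2,3} {4,5,6} expU
    (by intro j; simp only [Set.mem_univ, Set.mem_insert_iff, Set.mem_singleton_iff, acc7,
         true_and]; revert j; decide)
    (by intro j; simp only [Set.mem_univ, Set.mem_insert_iff, Set.mem_singleton_iff, acc7,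
         true_and]; revert j; decide),
    ncard4, ncard3]
  norm_num

/-- There is an instance (graph, thresholds, quality, `p = q = 1`)
where the naive seed set `{i accepting : π({i}) ≥ 0}` is empty (payoff `0`),
yet some seed set of accepting nodes achieves strictly positive payoff. -/
theorem naive_seed_set_suboptimal :
    ∃ (n : ℕ) (G : SimpleGraph (Fin n)) (θ : Fin n → ℝ) (φ : ℝ),
      (∀ i, θ i ∈ Set.Icc (0 : ℝ) 1) ∧ φ ∈ Set.Icc (0 : ℝ) 1 ∧
      {i : Fin n | θ i ≤ φ ∧ 0 ≤ payoff 1 1 G (fun v => θ v ≤ φ) {i}} = ∅ ∧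
      ∃ S : Set (Fin n), (∀ i ∈ S, θ i ≤ φ) ∧
        0 < payoff 1 1 G (fun v => θ v ≤ φ) S := by
  refine ⟨7, G7, θ7, 1/2, ?_, by norm_num, ?_, {0,1,2,3}, ?_, ?_⟩
  · intro i
    by_cases h : i.val ≤ 3 <;> simp [θ7, h]
  · rw [show (fun v : Fin 7 => θ7 v ≤ (1/2:ℝ)) = acc7 from acc7_eq]
    ext i
    simp only [Set.mem_setOf_eq, Set.mem_empty_iff_false, iff_false, not_and, not_le]
    intro hθ
    have hi : i.val ≤ 3 := by
      by_contra h
      simp [θ7, h] at hθ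
      linarith
    have h4 : i.val = 0 ∨ i.val = 1 ∨ i.val = 2 ∨ i.val = 3 := by omega
    rcases h4 with h|h|h|h
    · rw [show i = 0 from Fin.ext h, pay0]; norm_num
    · rw [show i = 1 from Fin.ext h, pay1]; norm_num
    · rw [show i = 2 from Fin.ext h, pay2]; norm_num
    · rw [show i = 3 from Fin.ext h, pay3]; norm_num
  · intro i hi
    simp only [Set.mem_insert_iff, Set.mem_singleton_iff] at hi
    have key : ∀ j : Fin 7, j.val ≤ 3 → θ7 j ≤ 1/2 := by
      intro j hj; norm_num [θ7, hj]
    rcases hi with rfl|rfl|rfl|rfl <;> exact key _ (by decide)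
  · rw [show (fun v : Fin 7 => θ7 v ≤ (1/2:ℝ)) = acc7 from acc7_eq, payU]
    norm_num
end

section
/- Minimizing cut capacity in G_N is equivalent to maximizing payoff: for any s-t cut (X,Y) of finite capacity, capacity(X,Y) = Σ_{i∈A} p|C_i^o| − (Σ_{i ∈ A∩X} p|C_i^o| − q|R ∩ X|), and the second parenthesized term equals the payoff π of seeding the clusters indexed by A ∩ X. Hence a minimum cut (X,Y) yields an optimal seed set A ∩ X. -/
open scoped ENNReal

/-- Nodes of the flow network `G_N`: source `Sum.inl true`, sink `Sum.inl false`,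
cluster nodes `Sum.inr (Sum.inl i)` for `i ∈ A`, boundary nodes
`Sum.inr (Sum.inr j)` for `j ∈ R`. -/
abbrev FlowNode (A R : Type*) := Bool ⊕ (A ⊕ R)

/-- Capacities of `G_N` (`w i = |C_i^o|`, `bdry i = C_i^b`). -/
noncomputable def cap {A R : Type*} [DecidableEq R] (w : A → ℕ) (bdry : A → Finset R)
    (p q : NNReal) : FlowNode A R → FlowNode A R → ℝ≥0∞ :=
  fun x y =>
    match x, y with
    | Sum.inl true, Sum.inr (Sum.inl i) => (p : ℝ≥0∞) * (w i : ℝ≥0∞)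
    | Sum.inr (Sum.inl i), Sum.inr (Sum.inr j) => if j ∈ bdry i then ⊤ else 0
    | Sum.inr (Sum.inr _), Sum.inl false => (q : ℝ≥0∞)
    | _, _ => 0

/-- Capacity of the cut `(X, Xᶜ)`. -/
noncomputable def cutCapacity {A R : Type*} [DecidableEq R] (w : A → ℕ)
    (bdry : A → Finset R) (p q : NNReal) (X : Set (FlowNode A R)) : ℝ≥0∞ :=
  ∑' x : X, ∑' y : ↥Xᶜ, cap w bdry p q x.1 y.1

/-- Payoff of seeding one node from each cluster indexed by `T ⊆ A`:
`π(T) = Σ_{i∈T} p|C_i^o| − q·|⋃_{i∈T} C_i^b|` (interiors are disjoint). -/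
noncomputable def clusterPayoff {A R : Type*} [DecidableEq R] (w : A → ℕ)
    (bdry : A → Finset R) (p q : NNReal) (T : Set A) : ℝ :=
  (∑' i : T, (p : ℝ) * (w i.1 : ℝ)) - (q : ℝ) * (⋃ i ∈ T, (bdry i : Set R)).ncard

section Helpers

variable {A R : Type*} [Fintype A] [Fintype R] [DecidableEq R]
  (w : A → ℕ) (bdry : A → Finset R) (p q : NNReal)

open Classical Finset in
lemma cutCapacity_eq_double_sum (Y : Set (FlowNode A R)) :
    cutCapacity w bdry p q Y =
      ∑ x : FlowNode A R, ∑ y : FlowNode A R,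
        (if x ∈ Y then (if y ∉ Y then cap w bdry p q x y else 0) else 0) := by
  unfold cutCapacity
  rw [tsum_subtype Y (fun x => ∑' y : ↥Yᶜ, cap w bdry p q x y.1), tsum_fintype]
  apply Finset.sum_congr rfl
  intro x _
  rw [Set.indicator_apply]
  split
  · rw [tsum_subtype Yᶜ (fun y => cap w bdry p q x y), tsum_fintype]
    apply Finset.sum_congr rfl
    intro y _
    rw [Set.indicator_apply]
    simp [Set.mem_compl_iff]
  · simp

open Classical Finset in
lemma cutCapacity_formula (Y : Set (FlowNode A R))
    (hs : (Sum.inl true : FlowNode A R) ∈ Y)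
    (ht : (Sum.inl false : FlowNode A R) ∉ Y)
    (hcl : ∀ i j, Sum.inr (Sum.inl i) ∈ Y → j ∈ bdry i → (Sum.inr (Sum.inr j) : FlowNode A R) ∈ Y) :
    cutCapacity w bdry p q Y =
      (∑ i ∈ univ.filter (fun i => (Sum.inr (Sum.inl i) : FlowNode A R) ∉ Y),
        (p : ℝ≥0∞) * (w i : ℝ≥0∞))
      + (q : ℝ≥0∞) * (univ.filter (fun j => (Sum.inr (Sum.inr j) : FlowNode A R) ∈ Y)).card := by
  rw [cutCapacity_eq_double_sum]
  simp only [Fintype.sum_sum_type, Fintype.sum_bool]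
  simp [cap, hs, ht]
  have hz : (∑ x : A, if Sum.inr (Sum.inl x) ∈ Y then
      (∑ x_1 : R, if Sum.inr (Sum.inr x_1) ∈ Y then 0 else if x_1 ∈ bdry x then (⊤:ℝ≥0∞) else 0)
      else 0) = 0 := by
    apply Finset.sum_eq_zero; intro i _
    by_cases hi : Sum.inr (Sum.inl i) ∈ Y
    · rw [if_pos hi]; apply Finset.sum_eq_zero; intro j _
      by_cases hj : (Sum.inr (Sum.inr j) : FlowNode A R) ∈ Y
      · rw [if_pos hj]
      · rw [if_neg hj, if_neg (fun hb => hj (hcl i j hi hb))]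
    · rw [if_neg hi]
  rw [hz, zero_add]
  congr 1
  · rw [Finset.sum_filter]
    apply Finset.sum_congr rfl; intro i _
    by_cases h : Sum.inr (Sum.inl i) ∈ Y <;> simp [h]
  · rw [← Finset.sum_filter, Finset.sum_const, nsmul_eq_mul, mul_comm]


lemma closed_of_ne_top (Y : Set (FlowNode A R)) (h : cutCapacity w bdry p q Y ≠ ⊤) :
    ∀ i j, Sum.inr (Sum.inl i) ∈ Y → j ∈ bdry i → (Sum.inr (Sum.inr j) : FlowNode A R) ∈ Y := by
  intro i j hi hb
  by_contra hj
  apply h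
  have h1 : cap w bdry p q (Sum.inr (Sum.inl i)) (Sum.inr (Sum.inr j)) ≤
      ∑' y : ↥Yᶜ, cap w bdry p q (Sum.inr (Sum.inl i)) y.1 :=
    ENNReal.le_tsum (⟨_, hj⟩ : ↥Yᶜ)
  have h2 : (∑' y : ↥Yᶜ, cap w bdry p q (Sum.inr (Sum.inl i)) y.1) ≤ cutCapacity w bdry p q Y :=
    ENNReal.le_tsum (⟨_, hi⟩ : ↥Y)
  have hc : cap w bdry p q (Sum.inr (Sum.inl i)) (Sum.inr (Sum.inr j)) = ⊤ := by
    simp [cap, hb]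
  rw [eq_top_iff]
  exact hc ▸ (h1.trans h2)

open Classical Finset in
lemma formula_ne_top (s : Finset A) (t : Finset R) :
    ((∑ i ∈ s, (p : ℝ≥0∞) * (w i : ℝ≥0∞)) + (q : ℝ≥0∞) * (t.card : ℝ≥0∞)) ≠ ⊤ := by
  apply ENNReal.add_ne_top.mpr
  constructor
  · refine (ENNReal.sum_lt_top.mpr ?_).ne
    intro i _
    exact (ENNReal.mul_lt_top ENNReal.coe_lt_top (ENNReal.natCast_lt_top _)).ne.lt_top
  · exact (ENNReal.mul_ne_top ENNReal.coe_ne_top (ENNReal.natCast_ne_top _))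

open Classical Finset in
lemma cutCapacity_toReal (Y : Set (FlowNode A R))
    (hs : (Sum.inl true : FlowNode A R) ∈ Y)
    (ht : (Sum.inl false : FlowNode A R) ∉ Y)
    (hne : cutCapacity w bdry p q Y ≠ ⊤) :
    (cutCapacity w bdry p q Y).toReal =
      (∑ i : A, (p : ℝ) * (w i : ℝ)) -
        ((∑ i ∈ univ.filter (fun i => (Sum.inr (Sum.inl i) : FlowNode A R) ∈ Y),
            (p : ℝ) * (w i : ℝ)) -
          (q : ℝ) * ((univ.filter (fun j => (Sum.inr (Sum.inr j) : FlowNode A R) ∈ Y)).card : ℝ)) := by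
  rw [cutCapacity_formula w bdry p q Y hs ht (closed_of_ne_top w bdry p q Y hne)]
  rw [ENNReal.toReal_add, ENNReal.toReal_mul, ENNReal.toReal_sum]
  · have hsplit : (∑ i : A, (p : ℝ) * (w i : ℝ)) =
        (∑ i ∈ univ.filter (fun i => (Sum.inr (Sum.inl i) : FlowNode A R) ∈ Y),
          (p : ℝ) * (w i : ℝ)) +
        (∑ i ∈ univ.filter (fun i => (Sum.inr (Sum.inl i) : FlowNode A R) ∉ Y),
          (p : ℝ) * (w i : ℝ)) := by
      rw [Finset.sum_filter_add_sum_filter_not]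
    rw [hsplit]
    simp [ENNReal.toReal_mul]
    try ring
  all_goals
    first
      | exact ENNReal.mul_ne_top ENNReal.coe_ne_top (ENNReal.natCast_ne_top _)
      | (intro i _; exact ENNReal.mul_ne_top ENNReal.coe_ne_top (ENNReal.natCast_ne_top _))
      | (refine (ENNReal.sum_lt_top.mpr ?_).ne; intro i _;
         exact (ENNReal.mul_ne_top ENNReal.coe_ne_top (ENNReal.natCast_ne_top _)).lt_top)

def seedCut (T : Set A) : Set (FlowNode A R) :=
  {x | x = Sum.inl true ∨ (∃ i ∈ T, x = Sum.inr (Sum.inl i)) ∨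
    (∃ i ∈ T, ∃ j ∈ bdry i, x = Sum.inr (Sum.inr j))}

lemma seedCut_s (T : Set A) : (Sum.inl true : FlowNode A R) ∈ seedCut bdry T := Or.inl rfl

lemma seedCut_t (T : Set A) : (Sum.inl false : FlowNode A R) ∉ seedCut bdry T := by
  simp [seedCut]

lemma seedCut_cluster (T : Set A) (i : A) :
    (Sum.inr (Sum.inl i) : FlowNode A R) ∈ seedCut bdry T ↔ i ∈ T := by
  simp [seedCut]

lemma seedCut_bdry (T : Set A) (j : R) :
    (Sum.inr (Sum.inr j) : FlowNode A R) ∈ seedCut bdry T ↔ ∃ i ∈ T, j ∈ bdry i := by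
  simp [seedCut]

open Classical Finset in
lemma seedCut_ne_top (T : Set A) : cutCapacity w bdry p q (seedCut bdry T) ≠ ⊤ := by
  rw [cutCapacity_formula w bdry p q _ (seedCut_s bdry T) (seedCut_t bdry T)
    (fun i j hi hb => (seedCut_bdry bdry T j).mpr ⟨i, (seedCut_cluster bdry T i).mp hi, hb⟩)]
  exact formula_ne_top w p q _ _

open Classical Finset in
lemma seedCut_toReal (T : Set A) :
    (cutCapacity w bdry p q (seedCut bdry T)).toReal =
      (∑ i : A, (p : ℝ) * (w i : ℝ)) -
        ((∑ i ∈ univ.filter (fun i => i ∈ T), (p : ℝ) * (w i : ℝ)) -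
          (q : ℝ) * ((univ.filter (fun j => ∃ i ∈ T, j ∈ bdry i)).card : ℝ)) := by
  rw [cutCapacity_toReal w bdry p q _ (seedCut_s bdry T) (seedCut_t bdry T)
    (seedCut_ne_top w bdry p q T)]
  have h1 : univ.filter (fun i => (Sum.inr (Sum.inl i) : FlowNode A R) ∈ seedCut bdry T)
      = univ.filter (fun i => i ∈ T) :=
    Finset.filter_congr (fun i _ => by simp [seedCut_cluster])
  have h2 : univ.filter (fun j => (Sum.inr (Sum.inr j) : FlowNode A R) ∈ seedCut bdry T)
      = univ.filter (fun j => ∃ i ∈ T, j ∈ bdry i) :=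
    Finset.filter_congr (fun j _ => by simp [seedCut_bdry])
  rw [h1, h2]

open Classical Finset in
lemma tsum_pred (P : A → Prop) (f : A → ℝ) :
    ∑' i : {i : A // P i}, f i.1 = ∑ i ∈ univ.filter (fun i => P i), f i := by
  rw [tsum_fintype]
  exact (Finset.sum_subtype _ (by simp) f).symm

open Classical Finset in
lemma ncard_pred (P : R → Prop) :
    ({j : R | P j}).ncard = (univ.filter (fun j => P j)).card := by
  rw [Set.ncard_eq_toFinset_card', Set.toFinset_setOf]

open Classical Finset in
lemma clusterPayoff_eq (T : Set A) :
    clusterPayoff w bdry p q T =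
      (∑ i ∈ univ.filter (fun i => i ∈ T), (p : ℝ) * (w i : ℝ)) -
        (q : ℝ) * ((univ.filter (fun j => ∃ i ∈ T, j ∈ bdry i)).card : ℝ) := by
  unfold clusterPayoff
  congr 1
  · exact tsum_pred (fun i => i ∈ T) (fun i => (p : ℝ) * (w i : ℝ))
  · congr 1
    have : (⋃ i ∈ T, (bdry i : Set R)) = {j | ∃ i ∈ T, j ∈ bdry i} := by
      ext j; simp
    rw [this, ncard_pred]
    congr!

end Helpers

set_option linter.unusedSectionVars false
open Classical Finset

/-- For any finite-capacity `s`-`t` cut `(X, Y)` of `G_N`,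
`capacity(X,Y) = Σ_{i∈A} p|C_i^o| − (Σ_{i∈A∩X} p|C_i^o| − q|R∩X|)`; for a
minimum cut `(X, Y)` the parenthesized term is exactly the payoff of seeding
the clusters indexed by `A ∩ X`, and `A ∩ X` is an optimal seed set. -/
theorem min_cut_gives_optimal_seed_set {A R : Type*} [Fintype A] [Fintype R]
    [DecidableEq R] (w : A → ℕ) (bdry : A → Finset R) (p q : NNReal)
    (X : Set (FlowNode A R))
    (hs : (Sum.inl true : FlowNode A R) ∈ X)
    (ht : (Sum.inl false : FlowNode A R) ∉ X)
    (hmin : ∀ Y : Set (FlowNode A R), (Sum.inl true : FlowNode A R) ∈ Y →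
      (Sum.inl false : FlowNode A R) ∉ Y →
      cutCapacity w bdry p q X ≤ cutCapacity w bdry p q Y) :
    (∀ Y : Set (FlowNode A R), (Sum.inl true : FlowNode A R) ∈ Y →
      (Sum.inl false : FlowNode A R) ∉ Y → cutCapacity w bdry p q Y ≠ ⊤ →
      (cutCapacity w bdry p q Y).toReal =
        (∑' i : A, (p : ℝ) * (w i : ℝ)) -
          ((∑' i : {i : A // Sum.inr (Sum.inl i) ∈ Y}, (p : ℝ) * (w i.1 : ℝ)) -
            (q : ℝ) * ({j : R | Sum.inr (Sum.inr j) ∈ Y}.ncard : ℝ))) ∧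
    (cutCapacity w bdry p q X).toReal =
      (∑' i : A, (p : ℝ) * (w i : ℝ)) -
        clusterPayoff w bdry p q {i : A | Sum.inr (Sum.inl i) ∈ X} ∧
    (∀ T : Set A, clusterPayoff w bdry p q T ≤
      clusterPayoff w bdry p q {i : A | Sum.inr (Sum.inl i) ∈ X}) := by
  classical
  have htot : (∑' i : A, (p : ℝ) * (w i : ℝ)) = ∑ i : A, (p : ℝ) * (w i : ℝ) :=
    tsum_fintype _
  have part1 : ∀ Y : Set (FlowNode A R), (Sum.inl true : FlowNode A R) ∈ Y →
      (Sum.inl false : FlowNode A R) ∉ Y → cutCapacity w bdry p q Y ≠ ⊤ →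
      (cutCapacity w bdry p q Y).toReal =
        (∑' i : A, (p : ℝ) * (w i : ℝ)) -
          ((∑' i : {i : A // Sum.inr (Sum.inl i) ∈ Y}, (p : ℝ) * (w i.1 : ℝ)) -
            (q : ℝ) * ({j : R | Sum.inr (Sum.inr j) ∈ Y}.ncard : ℝ)) := by
    intro Y hsY htY hneY
    rw [cutCapacity_toReal w bdry p q Y hsY htY hneY, htot,
      tsum_pred (fun i => (Sum.inr (Sum.inl i) : FlowNode A R) ∈ Y)
        (fun i => (p : ℝ) * (w i : ℝ)),
      ncard_pred (fun j => (Sum.inr (Sum.inr j) : FlowNode A R) ∈ Y)]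
  have hXne : cutCapacity w bdry p q X ≠ ⊤ := by
    intro h
    have h2 := hmin (seedCut bdry (∅ : Set A)) (seedCut_s bdry ∅) (seedCut_t bdry ∅)
    rw [h] at h2
    exact seedCut_ne_top w bdry p q ∅ (top_le_iff.mp h2)
  have hcl := closed_of_ne_top w bdry p q X hXne
  set T : Set A := {i : A | Sum.inr (Sum.inl i) ∈ X} with hT
  have hfA : univ.filter (fun i => (Sum.inr (Sum.inl i) : FlowNode A R) ∈ X)
      = univ.filter (fun i => i ∈ T) :=
    Finset.filter_congr (fun i _ => by simp [hT])
  have hsub : univ.filter (fun j => ∃ i ∈ T, j ∈ bdry i) ⊆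
      univ.filter (fun j => (Sum.inr (Sum.inr j) : FlowNode A R) ∈ X) := by
    intro j hj
    simp only [Finset.mem_filter, Finset.mem_univ, true_and] at hj ⊢
    obtain ⟨i, hi, hb⟩ := hj
    exact hcl i j hi hb
  have hc21 : (univ.filter (fun j => ∃ i ∈ T, j ∈ bdry i)).card ≤
      (univ.filter (fun j => (Sum.inr (Sum.inr j) : FlowNode A R) ∈ X)).card :=
    Finset.card_le_card hsub
  have hXT : (cutCapacity w bdry p q X).toReal ≤
      (cutCapacity w bdry p q (seedCut bdry T)).toReal :=
    (ENNReal.toReal_le_toReal hXne (seedCut_ne_top w bdry p q T)).mpr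
      (hmin _ (seedCut_s bdry T) (seedCut_t bdry T))
  rw [cutCapacity_toReal w bdry p q X hs ht hXne, seedCut_toReal w bdry p q T, hfA] at hXT
  have hq1 : (q : ℝ) * ((univ.filter (fun j => (Sum.inr (Sum.inr j) : FlowNode A R) ∈ X)).card : ℝ)
      ≤ (q : ℝ) * ((univ.filter (fun j => ∃ i ∈ T, j ∈ bdry i)).card : ℝ) := by
    linarith
  have hq2 : (q : ℝ) * ((univ.filter (fun j => ∃ i ∈ T, j ∈ bdry i)).card : ℝ)
      ≤ (q : ℝ) * ((univ.filter (fun j => (Sum.inr (Sum.inr j) : FlowNode A R) ∈ X)).card : ℝ) :=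
    mul_le_mul_of_nonneg_left (Nat.cast_le.mpr hc21) q.coe_nonneg
  have hqeq := le_antisymm hq1 hq2
  have part2 : (cutCapacity w bdry p q X).toReal =
      (∑' i : A, (p : ℝ) * (w i : ℝ)) - clusterPayoff w bdry p q T := by
    rw [cutCapacity_toReal w bdry p q X hs ht hXne, clusterPayoff_eq, htot, hfA]
    linarith
  refine ⟨part1, part2, ?_⟩
  intro T'
  have h3 : (cutCapacity w bdry p q X).toReal ≤
      (cutCapacity w bdry p q (seedCut bdry T')).toReal :=
    (ENNReal.toReal_le_toReal hXne (seedCut_ne_top w bdry p q T')).mpr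
      (hmin _ (seedCut_s bdry T') (seedCut_t bdry T'))
  rw [part2, seedCut_toReal w bdry p q T', ← clusterPayoff_eq, htot] at h3
  linarith
end

section
/- In the generalized model, adding all Type III agents to any seed set weakly increases the payoff: π(S) ≤ π(S ∪ T_3). -/
/-- Type I agents: `φ < τ_i` (they ignore the product). -/
def T1 {V : Type*} (τ : V → ℝ) (φ : ℝ) : Set V := {i | φ < τ i}

/-- Type II agents: `τ_i ≤ φ < θ_i` (they view but reject the product). -/
def T2 {V : Type*} (τ θ : V → ℝ) (φ : ℝ) : Set V := {i | τ i ≤ φ ∧ φ < θ i}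

/-- Type III agents: `θ_i ≤ φ < σ_i` (they accept but do not advertise). -/
def T3 {V : Type*} (θ σ : V → ℝ) (φ : ℝ) : Set V := {i | θ i ≤ φ ∧ φ < σ i}

/-- Type IV agents: `σ_i ≤ φ` (they accept and advertise to all neighbors). -/
def T4 {V : Type*} (σ : V → ℝ) (φ : ℝ) : Set V := {i | σ i ≤ φ}

/-- `V(S)` in the generalized model: agents reachable from the seed set `S`
by a path all of whose internal nodes are Type IV (advertising) agents. -/
def gExposed {V : Type*} (G : SimpleGraph V) (σ : V → ℝ) (φ : ℝ) (S : Set V) : Set V :=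
  {j | ∃ i ∈ S, Relation.ReflTransGen (fun a b => G.Adj a b ∧ σ a ≤ φ) i j}

/-- Generalized payoff:
`π(S) = p·|V(S) ∩ (T_3 ∪ T_4)| − q·|V(S) ∩ T_2|`. -/
noncomputable def gPayoff {V : Type*} (p q : ℝ) (G : SimpleGraph V)
    (τ θ σ : V → ℝ) (φ : ℝ) (S : Set V) : ℝ :=
  p * ((gExposed G σ φ S ∩ (T3 θ σ φ ∪ T4 σ φ)).ncard : ℝ)
    - q * ((gExposed G σ φ S ∩ T2 τ θ φ).ncard : ℝ)

/-- In the generalized model, adding all Type III agents to any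
seed set weakly increases the payoff: `π(S) ≤ π(S ∪ T_3)`. -/
theorem gPayoff_union_T3 {V : Type*} [Fintype V] (G : SimpleGraph V)
    (τ θ σ : V → ℝ) (φ : ℝ) (p q : ℝ) (hp : 0 < p) (hq : 0 < q)
    (hord : ∀ i, τ i ≤ θ i ∧ θ i ≤ σ i) (S : Set V) :
    gPayoff p q G τ θ σ φ S ≤ gPayoff p q G τ θ σ φ (S ∪ T3 θ σ φ) := by
  have key : gExposed G σ φ (S ∪ T3 θ σ φ) = gExposed G σ φ S ∪ T3 θ σ φ := by
    ext j
    constructor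
    · rintro ⟨i, hi | hi, hij⟩
      · exact Or.inl ⟨i, hi, hij⟩
      · rcases hij.cases_head with rfl | ⟨c, ⟨_, hσ⟩, _⟩
        · exact Or.inr hi
        · exact absurd hσ (not_le.2 hi.2)
    · rintro (⟨i, hi, hij⟩ | hj)
      · exact ⟨i, Or.inl hi, hij⟩
      · exact ⟨j, Or.inr hj, Relation.ReflTransGen.refl⟩
  have hE2 : gExposed G σ φ (S ∪ T3 θ σ φ) ∩ T2 τ θ φ
      = gExposed G σ φ S ∩ T2 τ θ φ := by
    rw [key, Set.union_inter_distrib_right]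
    have : T3 θ σ φ ∩ T2 τ θ φ = ∅ := by
      ext i
      simp only [Set.mem_inter_iff, Set.mem_empty_iff_false, iff_false, T2, T3,
        Set.mem_setOf_eq]
      rintro ⟨⟨h1, _⟩, ⟨_, h2⟩⟩
      exact absurd h1 (not_le.2 h2)
    rw [this, Set.union_empty]
  have h34 : (gExposed G σ φ S ∩ (T3 θ σ φ ∪ T4 σ φ)).ncard
      ≤ (gExposed G σ φ (S ∪ T3 θ σ φ) ∩ (T3 θ σ φ ∪ T4 σ φ)).ncard := by
    apply Set.ncard_le_ncard
    · apply Set.inter_subset_inter_left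
      rw [key]; exact Set.subset_union_left
    · exact Set.toFinite _
  unfold gPayoff
  rw [hE2]
  have := mul_le_mul_of_nonneg_left (Nat.cast_le.2 h34 : (_ : ℝ) ≤ _) hp.le
  linarith
end

section
/- In the generalized model, if S' is an optimal seed set for the subgraph G' induced on agents of Types II and IV, then S' ∪ T_3 is an optimal seed set for the full graph G, and π_G(S' ∪ T_3) = π_{G'}(S') + p·|T_3|. -/
/-- `V(S')` in the induced subgraph `G'` on agents of Types II and IV:
nodes of `G'` reachable from `S'` by paths inside `G'` whose internal
nodes are Type IV (the accepting/advertising nodes of `G'`). -/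
def subExposed {V : Type*} (G : SimpleGraph V) (τ θ σ : V → ℝ) (φ : ℝ)
    (S : Set V) : Set V :=
  {j | j ∈ T2 τ θ φ ∪ T4 σ φ ∧ ∃ i ∈ S,
    Relation.ReflTransGen
      (fun a b => G.Adj a b ∧ a ∈ T2 τ θ φ ∪ T4 σ φ ∧ b ∈ T2 τ θ φ ∪ T4 σ φ ∧ σ a ≤ φ)
      i j}

/-- Payoff in the subgraph `G'` (basic model: Type IV accepting, Type II rejecting). -/
noncomputable def subPayoff {V : Type*} (p q : ℝ) (G : SimpleGraph V)
    (τ θ σ : V → ℝ) (φ : ℝ) (S : Set V) : ℝ :=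
  p * ((subExposed G τ θ σ φ S ∩ T4 σ φ).ncard : ℝ)
    - q * ((subExposed G τ θ σ φ S ∩ T2 τ θ φ).ncard : ℝ)

section Aux
variable {V : Type*} (G : SimpleGraph V) (τ θ σ : V → ℝ) (φ : ℝ)

lemma gExposed_union (S T : Set V) :
    gExposed G σ φ (S ∪ T) = gExposed G σ φ S ∪ gExposed G σ φ T := by
  ext j
  constructor
  · rintro ⟨i, (hi | hi), h⟩
    · exact Or.inl ⟨i, hi, h⟩
    · exact Or.inr ⟨i, hi, h⟩
  · rintro (⟨i, hi, h⟩ | ⟨i, hi, h⟩)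
    exacts [⟨i, Or.inl hi, h⟩, ⟨i, Or.inr hi, h⟩]

lemma subset_gExposed (S : Set V) : S ⊆ gExposed G σ φ S :=
  fun i hi => ⟨i, hi, .refl⟩

lemma gExposed_mono {S T : Set V} (h : S ⊆ T) :
    gExposed G σ φ S ⊆ gExposed G σ φ T := by
  rintro j ⟨i, hi, hr⟩; exact ⟨i, h hi, hr⟩

lemma gExposed_T3 : gExposed G σ φ (T3 θ σ φ) = T3 θ σ φ := by
  ext j
  constructor
  · rintro ⟨i, hi, h⟩
    rcases Relation.ReflTransGen.cases_head h with rfl | ⟨b, ⟨_, hσ⟩, _⟩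
    · exact hi
    · exact absurd hσ (not_le.2 hi.2)
  · intro hj; exact ⟨j, hj, .refl⟩

lemma gExposed_subset_union (S : Set V) :
    gExposed G σ φ S ⊆ S ∪ gExposed G σ φ (S ∩ T4 σ φ) := by
  rintro j ⟨i, hi, h⟩
  rcases Relation.ReflTransGen.cases_head h with rfl | ⟨b, ⟨hadj, hσ⟩, hb⟩
  · exact Or.inl hi
  · exact Or.inr ⟨i, ⟨hi, hσ⟩, h⟩

lemma rtg_lift {i j : V}
    (hj : j ∈ T2 τ θ φ ∪ T4 σ φ)
    (h : Relation.ReflTransGen (fun a b => G.Adj a b ∧ σ a ≤ φ) i j) :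
    Relation.ReflTransGen
      (fun a b => G.Adj a b ∧ a ∈ T2 τ θ φ ∪ T4 σ φ ∧ b ∈ T2 τ θ φ ∪ T4 σ φ ∧ σ a ≤ φ)
      i j := by
  revert hj
  induction h with
  | refl => intro _; exact .refl
  | @tail b c h hstep ih =>
      intro hc
      have hb : b ∈ T2 τ θ φ ∪ T4 σ φ := Or.inr hstep.2
      exact (ih hb).tail ⟨hstep.1, hb, hc, hstep.2⟩

lemma subExposed_eq (S : Set V) :
    subExposed G τ θ σ φ S = gExposed G σ φ S ∩ (T2 τ θ φ ∪ T4 σ φ) := by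
  ext j
  constructor
  · rintro ⟨hj, i, hi, h⟩
    exact ⟨⟨i, hi, (by refine Relation.ReflTransGen.mono ?_ _ _ h; exact fun a b hab => ⟨hab.1, hab.2.2.2⟩)⟩, hj⟩
  · rintro ⟨⟨i, hi, h⟩, hj⟩
    exact ⟨hj, i, hi, rtg_lift G τ θ σ φ hj h⟩

lemma subExposed_inter_T4 (S : Set V) :
    subExposed G τ θ σ φ S ∩ T4 σ φ = gExposed G σ φ S ∩ T4 σ φ := by
  rw [subExposed_eq, Set.inter_assoc, Set.union_inter_cancel_right]

lemma subExposed_inter_T2 (S : Set V) :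
    subExposed G τ θ σ φ S ∩ T2 τ θ φ = gExposed G σ φ S ∩ T2 τ θ φ := by
  rw [subExposed_eq, Set.inter_assoc, Set.union_inter_cancel_left]

end Aux

/-- If `S'` is an optimal seed set for the subgraph `G'` induced
on agents of Types II and IV, then `S' ∪ T_3` is an optimal seed set for the
full graph `G`, and `π_G(S' ∪ T_3) = π_{G'}(S') + p·|T_3|`. -/
theorem subgraph_opt_gives_opt {V : Type*} [Fintype V] (G : SimpleGraph V)
    (τ θ σ : V → ℝ) (φ : ℝ) (p q : ℝ) (hp : 0 < p) (hq : 0 < q)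
    (hord : ∀ i, τ i ≤ θ i ∧ θ i ≤ σ i)
    (S' : Set V) (hS' : S' ⊆ T4 σ φ)
    (hopt : ∀ T : Set V, T ⊆ T4 σ φ →
      subPayoff p q G τ θ σ φ T ≤ subPayoff p q G τ θ σ φ S') :
    gPayoff p q G τ θ σ φ (S' ∪ T3 θ σ φ) =
      subPayoff p q G τ θ σ φ S' + p * ((T3 θ σ φ).ncard : ℝ) ∧
    (∀ S : Set V, gPayoff p q G τ θ σ φ S ≤
      gPayoff p q G τ θ σ φ (S' ∪ T3 θ σ φ)) := by
  classical
  have hfin : ∀ A : Set V, A.Finite := fun A => A.toFinite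
  have h34 : ∀ j, j ∈ T3 θ σ φ → j ∉ T4 σ φ := fun j hj h4 => absurd h4 (not_le.2 hj.2)
  have h32 : ∀ j, j ∈ T3 θ σ φ → j ∉ T2 τ θ φ := fun j hj h2 => absurd hj.1 (not_le.2 h2.2)
  have hE : gExposed G σ φ (S' ∪ T3 θ σ φ) = gExposed G σ φ S' ∪ T3 θ σ φ := by
    rw [gExposed_union, gExposed_T3]
  have e1 : gExposed G σ φ (S' ∪ T3 θ σ φ) ∩ (T3 θ σ φ ∪ T4 σ φ)
      = (gExposed G σ φ S' ∩ T4 σ φ) ∪ T3 θ σ φ := by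
    rw [hE]
    ext j
    simp only [Set.mem_inter_iff, Set.mem_union]
    tauto
  have e2 : gExposed G σ φ (S' ∪ T3 θ σ φ) ∩ T2 τ θ φ
      = gExposed G σ φ S' ∩ T2 τ θ φ := by
    rw [hE]
    ext j
    simp only [Set.mem_inter_iff, Set.mem_union]
    have := h32 j
    tauto
  have hdisj : Disjoint (gExposed G σ φ S' ∩ T4 σ φ) (T3 θ σ φ) :=
    Set.disjoint_left.2 (fun i hi hi3 => h34 i hi3 hi.2)
  have part1 : gPayoff p q G τ θ σ φ (S' ∪ T3 θ σ φ) =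
      subPayoff p q G τ θ σ φ S' + p * ((T3 θ σ φ).ncard : ℝ) := by
    unfold gPayoff subPayoff
    rw [e1, e2, subExposed_inter_T4, subExposed_inter_T2,
      Set.ncard_union_eq hdisj (hfin _) (hfin _)]
    push_cast
    ring
  refine ⟨part1, fun S => ?_⟩
  rw [part1]
  set Tt := S ∩ T4 σ φ with hTt
  have hTt4 : Tt ⊆ T4 σ φ := Set.inter_subset_right
  set A := gExposed G σ φ S with hA
  set F := gExposed G σ φ Tt with hF
  have hFA : F ⊆ A := gExposed_mono G σ φ Set.inter_subset_left
  have hA4 : A ∩ T4 σ φ = F ∩ T4 σ φ := by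
    apply subset_antisymm
    · rintro j ⟨hjA, hj4⟩
      rcases gExposed_subset_union G σ φ S hjA with hjS | hjF
      · exact ⟨subset_gExposed G σ φ Tt ⟨hjS, hj4⟩, hj4⟩
      · exact ⟨hjF, hj4⟩
    · exact Set.inter_subset_inter_left _ hFA
  have hA2 : F ∩ T2 τ θ φ ⊆ A ∩ T2 τ θ φ := Set.inter_subset_inter_left _ hFA
  have hdisj2 : Disjoint (A ∩ T3 θ σ φ) (A ∩ T4 σ φ) :=
    Set.disjoint_left.2 (fun i hi hi4 => h34 i hi.2 hi4.2)
  have c1 : ((A ∩ (T3 θ σ φ ∪ T4 σ φ)).ncard : ℝ)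
      = ((A ∩ T3 θ σ φ).ncard : ℝ) + ((A ∩ T4 σ φ).ncard : ℝ) := by
    rw [Set.inter_union_distrib_left, Set.ncard_union_eq hdisj2 (hfin _) (hfin _)]
    push_cast
    ring
  have c2 : ((A ∩ T3 θ σ φ).ncard : ℝ) ≤ ((T3 θ σ φ).ncard : ℝ) := by
    exact_mod_cast Set.ncard_le_ncard Set.inter_subset_right (hfin _)
  have c3 : ((F ∩ T2 τ θ φ).ncard : ℝ) ≤ ((A ∩ T2 τ θ φ).ncard : ℝ) := by
    exact_mod_cast Set.ncard_le_ncard hA2 (hfin _)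
  have csub : subPayoff p q G τ θ σ φ Tt =
      p * ((F ∩ T4 σ φ).ncard : ℝ) - q * ((F ∩ T2 τ θ φ).ncard : ℝ) := by
    unfold subPayoff
    rw [subExposed_inter_T4, subExposed_inter_T2]
  have hchain := hopt Tt hTt4
  have m1 := mul_le_mul_of_nonneg_left c2 hp.le
  have m2 := mul_le_mul_of_nonneg_left c3 hq.le
  unfold gPayoff
  rw [c1, hA4]
  linarith [hchain, csub.symm.le, csub.le]
end

section
/- In the clique reduction, if S is a set of k mutually adjacent nodes of a d-regular graph G, then in the subdivided graph G' the seed set S is exposed to exactly kd − C(k,2) rejecting (subdivision) nodes, so its payoff is kp − (kd − C(k,2)), which is strictly positive when p = d − (k−1)/2 + ε with 0 < ε. -/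
open Finset

lemma count_incident {V : Type*} [Fintype V] [DecidableEq V]
    (G : SimpleGraph V) [DecidableRel G.Adj] (d k : ℕ)
    (hreg : ∀ v, G.degree v = d)
    (S : Finset V) (hcard : S.card = k)
    (hclique : ∀ i ∈ S, ∀ j ∈ S, i ≠ j → G.Adj i j) :
    (G.edgeFinset.filter (fun e => ∃ i ∈ S, i ∈ e)).card = k * d - k.choose 2 := by
  classical
  set T1 := G.edgeFinset.filter (fun e => ∃ i ∈ S, i ∈ e) with hT1
  set B := S.offDiag.image (Function.uncurry Sym2.mk) with hB
  have hBcard : B.card = k.choose 2 := by rw [hB, Sym2.card_image_offDiag, hcard]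
  have hBsub : B ⊆ T1 := by
    intro e he
    rw [hB, Finset.mem_image] at he
    obtain ⟨⟨a, b⟩, hab, rfl⟩ := he
    rw [Finset.mem_offDiag] at hab
    rw [hT1, Finset.mem_filter]
    refine ⟨?_, a, hab.1, by simp⟩
    rw [SimpleGraph.mem_edgeFinset]
    exact hclique a hab.1 b hab.2.1 hab.2.2
  have hmemB : ∀ a b : V, (s(a, b) ∈ B ↔ a ∈ S ∧ b ∈ S ∧ a ≠ b) := by
    intro a b
    constructor
    · intro h
      rw [hB, Finset.mem_image] at h
      obtain ⟨⟨x, y⟩, hxy, hq⟩ := h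
      rw [Finset.mem_offDiag] at hxy
      rw [Function.uncurry_apply_pair, Sym2.eq_iff] at hq
      rcases hq with ⟨rfl, rfl⟩ | ⟨rfl, rfl⟩
      · exact ⟨hxy.1, hxy.2.1, hxy.2.2⟩
      · exact ⟨hxy.2.1, hxy.1, fun h => hxy.2.2 h.symm⟩
    · intro ⟨ha, hb, hab⟩
      rw [hB, Finset.mem_image]
      exact ⟨(a, b), Finset.mem_offDiag.mpr ⟨ha, hb, hab⟩, rfl⟩
  have key : k * d = T1.card + k.choose 2 := by
    have h1 : ∑ v ∈ S, (G.edgeFinset.filter (fun e => v ∈ e)).card = k * d := by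
      have heq : ∀ v ∈ S, (G.edgeFinset.filter (fun e => v ∈ e)).card = d := by
        intro v _
        rw [← hreg v, ← SimpleGraph.card_incidenceFinset_eq_degree]
        congr 1
        rw [G.incidenceFinset_eq_filter v]
      rw [Finset.sum_congr rfl heq, Finset.sum_const, hcard, smul_eq_mul]
    have h2 : ∑ v ∈ S, (G.edgeFinset.filter (fun e => v ∈ e)).card
        = ∑ e ∈ G.edgeFinset, (S.filter (fun v => v ∈ e)).card := by
      simp_rw [Finset.card_filter]
      exact Finset.sum_comm
    have h3 : ∑ e ∈ G.edgeFinset, (S.filter (fun v => v ∈ e)).card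
        = ∑ e ∈ T1, (S.filter (fun v => v ∈ e)).card := by
      rw [hT1]
      refine (Finset.sum_filter_of_ne ?_).symm
      intro e _ hne
      obtain ⟨v, hv⟩ := Finset.card_ne_zero.mp hne
      rw [Finset.mem_filter] at hv
      exact ⟨v, hv.1, hv.2⟩
    have h4 : ∀ e ∈ T1, (S.filter (fun v => v ∈ e)).card
        = 1 + (if e ∈ B then 1 else 0) := by
      intro e he
      induction e using Sym2.ind with
      | _ a b =>
        rw [hT1, Finset.mem_filter, SimpleGraph.mem_edgeFinset, SimpleGraph.mem_edgeSet] at he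
        obtain ⟨hadj, i, hiS, hie⟩ := he
        have hab : a ≠ b := hadj.ne
        have hfe : S.filter (fun v => v ∈ s(a, b)) = S.filter (fun v => v = a ∨ v = b) := by
          simp [Sym2.mem_iff]
        rw [hfe]
        rw [Sym2.mem_iff] at hie
        by_cases ha : a ∈ S <;> by_cases hb : b ∈ S
        · have : S.filter (fun v => v = a ∨ v = b) = {a, b} := by
            ext v
            simp only [Finset.mem_filter, Finset.mem_insert, Finset.mem_singleton]
            constructor
            · exact fun h => h.2
            · rintro (rfl | rfl) <;> simp [ha, hb]
          rw [this, Finset.card_insert_of_notMem (by simpa using hab), Finset.card_singleton,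
            if_pos ((hmemB a b).mpr ⟨ha, hb, hab⟩)]
        · have : S.filter (fun v => v = a ∨ v = b) = {a} := by
            ext v
            simp only [Finset.mem_filter, Finset.mem_singleton]
            constructor
            · rintro ⟨hv, rfl | rfl⟩
              · rfl
              · exact absurd hv hb
            · rintro rfl; exact ⟨ha, Or.inl rfl⟩
          rw [this, Finset.card_singleton, if_neg (fun h => hb ((hmemB a b).mp h).2.1)]
        · have : S.filter (fun v => v = a ∨ v = b) = {b} := by
            ext v
            simp only [Finset.mem_filter, Finset.mem_singleton]
            constructor
            · rintro ⟨hv, rfl | rfl⟩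
              · exact absurd hv ha
              · rfl
            · rintro rfl; exact ⟨hb, Or.inr rfl⟩
          rw [this, Finset.card_singleton, if_neg (fun h => ha ((hmemB a b).mp h).1)]
        · rcases hie with rfl | rfl
          · exact absurd hiS ha
          · exact absurd hiS hb
    have h5 : ∑ e ∈ T1, (S.filter (fun v => v ∈ e)).card = T1.card + B.card := by
      rw [Finset.sum_congr rfl h4, Finset.sum_add_distrib, Finset.sum_const, smul_eq_mul, mul_one,
        ← Finset.card_filter]
      congr 1
      rw [Finset.filter_mem_eq_inter, Finset.inter_eq_right.mpr hBsub]
    rw [← h1, h2, h3, h5, hBcard]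
  omega


/-- The graph `G'` obtained from `G` by subdividing every edge: its nodes are
the original nodes (`Sum.inl v`) and one subdivision node per edge
(`Sum.inr e`), with `Sum.inl v` adjacent to `Sum.inr e` iff `v` is an
endpoint of `e`. -/
def subdiv {V : Type*} (G : SimpleGraph V) : SimpleGraph (V ⊕ G.edgeSet) where
  Adj x y :=
    (∃ (v : V) (e : G.edgeSet), x = Sum.inl v ∧ y = Sum.inr e ∧ v ∈ (e : Sym2 V)) ∨
    (∃ (v : V) (e : G.edgeSet), y = Sum.inl v ∧ x = Sum.inr e ∧ v ∈ (e : Sym2 V))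
  symm := by
    constructor
    rintro x y (h | h)
    · exact Or.inr h
    · exact Or.inl h
  loopless := by
    constructor
    rintro x (⟨v, e, h1, h2, _⟩ | ⟨v, e, h1, h2, _⟩) <;> subst h1 <;> simp at h2

/-- In `G'`, original nodes are accepting and subdivision nodes are rejecting. -/
def subdivAcc {V : Type*} (G : SimpleGraph V) : V ⊕ G.edgeSet → Prop :=
  fun x => x.isLeft = true

lemma reach_inl_iff {V : Type*} (G : SimpleGraph V) (i : V) (x : V ⊕ G.edgeSet) :
    reach (subdiv G) (subdivAcc G) (Sum.inl i) x ↔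
      x = Sum.inl i ∨ ∃ e : G.edgeSet, x = Sum.inr e ∧ i ∈ (e : Sym2 V) := by
  constructor
  · intro h
    induction h with
    | refl => exact Or.inl rfl
    | tail _ hstep ih =>
      obtain ⟨hadj, hacc⟩ := hstep
      rcases ih with rfl | ⟨e, rfl, he⟩
      · rcases hadj with ⟨v, e, h1, h2, hve⟩ | ⟨v, e, h1, h2, hve⟩
        · right
          refine ⟨e, h2, ?_⟩
          obtain rfl : i = v := Sum.inl.inj h1
          exact hve
        · exact absurd h2 (by simp)
      · simp [subdivAcc] at hacc
  · rintro (rfl | ⟨e, rfl, he⟩)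
    · exact Relation.ReflTransGen.refl
    · exact Relation.ReflTransGen.single ⟨Or.inl ⟨i, e, rfl, rfl, he⟩, rfl⟩

lemma Vneg_subdiv {V : Type*} (G : SimpleGraph V) (S : Set V) :
    Vneg (subdiv G) (subdivAcc G) (Sum.inl '' S) =
      Sum.inr '' {e : G.edgeSet | ∃ i ∈ S, i ∈ (e : Sym2 V)} := by
  ext x
  simp only [Vneg, exposedSet, Set.mem_setOf_eq, Set.mem_image]
  constructor
  · rintro ⟨⟨j, ⟨i, hiS, rfl⟩, hr⟩, hnacc⟩
    rw [reach_inl_iff] at hr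
    rcases hr with rfl | ⟨e, rfl, he⟩
    · exact absurd rfl hnacc
    · exact ⟨e, ⟨i, hiS, he⟩, rfl⟩
  · rintro ⟨e, ⟨i, hiS, hie⟩, rfl⟩
    refine ⟨⟨Sum.inl i, ⟨i, hiS, rfl⟩, ?_⟩, by simp [subdivAcc]⟩
    rw [reach_inl_iff]
    exact Or.inr ⟨e, rfl, hie⟩

lemma Vpos_subdiv {V : Type*} (G : SimpleGraph V) (S : Set V) :
    Vpos (subdiv G) (subdivAcc G) (Sum.inl '' S) = Sum.inl '' S := by
  ext x
  simp only [Vpos, exposedSet, Set.mem_setOf_eq, Set.mem_image]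
  constructor
  · rintro ⟨⟨j, ⟨i, hiS, rfl⟩, hr⟩, hacc⟩
    rw [reach_inl_iff] at hr
    rcases hr with rfl | ⟨e, rfl, he⟩
    · exact ⟨i, hiS, rfl⟩
    · simp [subdivAcc] at hacc
  · rintro ⟨i, hiS, rfl⟩
    exact ⟨⟨Sum.inl i, ⟨i, hiS, rfl⟩, Relation.ReflTransGen.refl⟩, rfl⟩

/-- In the clique reduction, if `S` is a set of `k` mutually
adjacent nodes of a `d`-regular graph `G`, then in the subdivided graph `G'`
the seed set `S` is exposed to exactly `kd − C(k,2)` rejecting (subdivision)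
nodes, so its payoff is `kp − (kd − C(k,2))`, which is strictly positive when
`p = d − (k−1)/2 + ε` with `ε > 0` (and `q = 1`). -/
theorem clique_seed_positive_payoff {V : Type*} [Fintype V] [DecidableEq V]
    (G : SimpleGraph V) [DecidableRel G.Adj] (d k : ℕ)
    (hreg : ∀ v, G.degree v = d) (hk : 2 ≤ k) (hkd : k ≤ d)
    (S : Finset V) (hcard : S.card = k)
    (hclique : ∀ i ∈ S, ∀ j ∈ S, i ≠ j → G.Adj i j)
    (p ε : ℝ) (hε : 0 < ε) (hp : p = (d : ℝ) - ((k : ℝ) - 1) / 2 + ε) :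
    (Vneg (subdiv G) (subdivAcc G) (Sum.inl '' (S : Set V))).ncard
        = k * d - k.choose 2 ∧
    payoff p 1 (subdiv G) (subdivAcc G) (Sum.inl '' (S : Set V)) =
      (k : ℝ) * p - ((k : ℝ) * (d : ℝ) - (k.choose 2 : ℝ)) ∧
    0 < payoff p 1 (subdiv G) (subdivAcc G) (Sum.inl '' (S : Set V)) := by
  classical
  have hT1 := count_incident G d k hreg S hcard hclique
  -- the set of exposed subdivision nodes
  set E : Set G.edgeSet := {e : G.edgeSet | ∃ i ∈ (S : Set V), i ∈ (e : Sym2 V)} with hE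
  have hval : Subtype.val '' E = ↑(G.edgeFinset.filter (fun e => ∃ i ∈ S, i ∈ e)) := by
    ext z
    simp only [Set.mem_image, Finset.coe_filter, Set.mem_setOf_eq, hE,
      SimpleGraph.mem_edgeFinset, Finset.mem_coe]
    constructor
    · rintro ⟨⟨e, he⟩, ⟨i, hiS, hie⟩, rfl⟩
      exact ⟨he, i, hiS, hie⟩
    · rintro ⟨he, i, hiS, hie⟩
      exact ⟨⟨z, he⟩, ⟨i, hiS, hie⟩, rfl⟩
  have hEncard : E.ncard = k * d - k.choose 2 := by
    rw [← Set.ncard_image_of_injective E Subtype.val_injective, hval,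
      Set.ncard_coe_finset, hT1]
  have hneg : (Vneg (subdiv G) (subdivAcc G) (Sum.inl '' (S : Set V))).ncard
      = k * d - k.choose 2 := by
    rw [Vneg_subdiv, Set.ncard_image_of_injective _ Sum.inr_injective]
    exact hEncard
  have hpos : (Vpos (subdiv G) (subdivAcc G) (Sum.inl '' (S : Set V))).ncard = k := by
    rw [Vpos_subdiv, Set.ncard_image_of_injective _ Sum.inl_injective,
      Set.ncard_coe_finset, hcard]
  have hle : k.choose 2 ≤ k * d := by
    calc k.choose 2 = k * (k - 1) / 2 := Nat.choose_two_right k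
    _ ≤ k * (k - 1) := Nat.div_le_self _ _
    _ ≤ k * d := Nat.mul_le_mul_left k (by omega)
  have hpay : payoff p 1 (subdiv G) (subdivAcc G) (Sum.inl '' (S : Set V)) =
      (k : ℝ) * p - ((k : ℝ) * (d : ℝ) - (k.choose 2 : ℝ)) := by
    rw [payoff, hpos, hneg, Nat.cast_sub hle]
    push_cast
    ring
  refine ⟨hneg, hpay, ?_⟩
  rw [hpay]
  have hc : (k.choose 2 : ℝ) = (k : ℝ) * ((k : ℝ) - 1) / 2 := by
    rw [Nat.cast_choose_two]
  have hk0 : (0 : ℝ) < (k : ℝ) := by positivity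
  rw [hp, hc]
  nlinarith [mul_pos hk0 hε]
end
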